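/- For any smooth (C¹) map w : ℝ² → ℝ² with |w| = 1 everywhere, div w = -2w₁w₂ · div Σ₁(w) + (w₁² - w₂²) · div Σ₂(w) pointwise. -/

import Mathlib

noncomputable section
open Real

/-- The first Jin-Kohn entropy. -/
def JKS1 (v : ℝ × ℝ) : ℝ × ℝ :=
  (v.2 * (1 - v.1 ^ 2 - v.2 ^ 2 / 3), v.1 * (1 - v.2 ^ 2 - v.1 ^ 2 / 3))

/-- The second Jin-Kohn entropy. -/
def JKS2 (v : ℝ × ℝ) : ℝ × ℝ :=
  (-v.1 * (1 - 2 * v.1 ^ 2 / 3), v.2 * (1 - 2 * v.2 ^ 2 / 3))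

/-- Partial derivative in the first coordinate direction. -/
def pd1 (f : ℝ × ℝ → ℝ) (x : ℝ × ℝ) : ℝ := fderiv ℝ f x (1, 0)

/-- Partial derivative in the second coordinate direction. -/
def pd2 (f : ℝ × ℝ → ℝ) (x : ℝ × ℝ) : ℝ := fderiv ℝ f x (0, 1)

set_option maxHeartbeats 1000000 in
theorem stmt4 (w : ℝ × ℝ → ℝ × ℝ) (hw : ContDiff ℝ 1 w)
    (hw1 : ∀ x, (w x).1 ^ 2 + (w x).2 ^ 2 = 1) (x : ℝ × ℝ) :
    pd1 (fun y => (w y).1) x + pd2 (fun y => (w y).2) x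
      = -2 * (w x).1 * (w x).2
          * (pd1 (fun y => (JKS1 (w y)).1) x + pd2 (fun y => (JKS1 (w y)).2) x)
        + ((w x).1 ^ 2 - (w x).2 ^ 2)
          * (pd1 (fun y => (JKS2 (w y)).1) x + pd2 (fun y => (JKS2 (w y)).2) x) := by
  have hwd : DifferentiableAt ℝ w x := (hw.differentiable one_ne_zero) x
  set u : ℝ × ℝ → ℝ := fun y => (w y).1 with hu_def
  set v : ℝ × ℝ → ℝ := fun y => (w y).2 with hv_def
  have hdu : DifferentiableAt ℝ u x := hwd.fst
  have hdv : DifferentiableAt ℝ v x := hwd.snd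
  set U := fderiv ℝ u x with hU_def
  set V := fderiv ℝ v x with hV_def
  have hU : HasFDerivAt u U x := hdu.hasFDerivAt
  have hV : HasFDerivAt v V x := hdv.hasFDerivAt
  -- constraint derivative
  have hU2 : HasFDerivAt (fun y => u y * u y) (u x • U + u x • U) x := hU.mul hU
  have hV2 : HasFDerivAt (fun y => v y * v y) (v x • V + v x • V) x := hV.mul hV
  have hconst : HasFDerivAt (fun y => u y * u y + v y * v y)
      ((u x • U + u x • U) + (v x • V + v x • V)) x := hU2.add hV2
  have hconst' : HasFDerivAt (fun y => u y * u y + v y * v y)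
      (0 : (ℝ × ℝ) →L[ℝ] ℝ) x := by
    have : (fun y => u y * u y + v y * v y) = fun _ => (1 : ℝ) := by
      funext y; have := hw1 y; nlinarith [hw1 y]
    rw [this]; exact hasFDerivAt_const 1 x
  have hzero : (u x • U + u x • U) + (v x • V + v x • V) = 0 := hconst.unique hconst'
  have hc1 : u x * U (1, 0) + v x * V (1, 0) = 0 := by
    have h := congrArg (fun L : (ℝ × ℝ) →L[ℝ] ℝ => L (1, 0)) hzero
    simp only [ContinuousLinearMap.add_apply, ContinuousLinearMap.smul_apply,
      ContinuousLinearMap.zero_apply, smul_eq_mul] at h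
    linarith
  have hc2 : u x * U (0, 1) + v x * V (0, 1) = 0 := by
    have h := congrArg (fun L : (ℝ × ℝ) →L[ℝ] ℝ => L (0, 1)) hzero
    simp only [ContinuousLinearMap.add_apply, ContinuousLinearMap.smul_apply,
      ContinuousLinearMap.zero_apply, smul_eq_mul] at h
    linarith
  -- derivatives of the entropy components
  have hS1a : HasFDerivAt (fun y => (JKS1 (w y)).1)
      (v x • ((0 : (ℝ × ℝ) →L[ℝ] ℝ) - (u x • U + u x • U) - (3 : ℝ)⁻¹ • (v x • V + v x • V))
        + (1 - u x * u x - (v x * v x) * 3⁻¹) • V) x := by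
    have heq : (fun y => (JKS1 (w y)).1)
        = fun y => v y * (1 - u y * u y - (3 : ℝ)⁻¹ * (v y * v y)) := by
      funext y; show v y * (1 - u y ^ 2 - v y ^ 2 / 3) = _; ring
    rw [heq]
    have h := hV.mul (((hasFDerivAt_const (1 : ℝ) x).sub hU2).sub
      (hV2.const_mul (3 : ℝ)⁻¹))
    rw [show (1 - u x * u x - (v x * v x) * 3⁻¹) = 1 - u x * u x - 3⁻¹ * (v x * v x) by ring]
    exact h
  have hS1b : HasFDerivAt (fun y => (JKS1 (w y)).2)
      (u x • ((0 : (ℝ × ℝ) →L[ℝ] ℝ) - (v x • V + v x • V) - (3 : ℝ)⁻¹ • (u x • U + u x • U))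
        + (1 - v x * v x - (u x * u x) * 3⁻¹) • U) x := by
    have heq : (fun y => (JKS1 (w y)).2)
        = fun y => u y * (1 - v y * v y - (3 : ℝ)⁻¹ * (u y * u y)) := by
      funext y; show u y * (1 - v y ^ 2 - u y ^ 2 / 3) = _; ring
    rw [heq]
    have h := hU.mul (((hasFDerivAt_const (1 : ℝ) x).sub hV2).sub
      (hU2.const_mul (3 : ℝ)⁻¹))
    rw [show (1 - v x * v x - (u x * u x) * 3⁻¹) = 1 - v x * v x - 3⁻¹ * (u x * u x) by ring]
    exact h
  have hS2a : HasFDerivAt (fun y => (JKS2 (w y)).1)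
      ((-u x) • ((0 : (ℝ × ℝ) →L[ℝ] ℝ) - (2 * 3⁻¹ : ℝ) • (u x • U + u x • U))
        + (1 - 2 * 3⁻¹ * (u x * u x)) • (-U)) x := by
    have heq : (fun y => (JKS2 (w y)).1)
        = fun y => (-u y) * (1 - (2 * 3⁻¹ : ℝ) * (u y * u y)) := by
      funext y; show -u y * (1 - 2 * u y ^ 2 / 3) = _; ring
    rw [heq]
    have h := (hU.neg).mul ((hasFDerivAt_const (1 : ℝ) x).sub
      (hU2.const_mul (2 * 3⁻¹ : ℝ)))
    exact h
  have hS2b : HasFDerivAt (fun y => (JKS2 (w y)).2)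
      (v x • ((0 : (ℝ × ℝ) →L[ℝ] ℝ) - (2 * 3⁻¹ : ℝ) • (v x • V + v x • V))
        + (1 - 2 * 3⁻¹ * (v x * v x)) • V) x := by
    have heq : (fun y => (JKS2 (w y)).2)
        = fun y => v y * (1 - (2 * 3⁻¹ : ℝ) * (v y * v y)) := by
      funext y; show v y * (1 - 2 * v y ^ 2 / 3) = _; ring
    rw [heq]
    have h := hV.mul ((hasFDerivAt_const (1 : ℝ) x).sub
      (hV2.const_mul (2 * 3⁻¹ : ℝ)))
    exact h
  have e1 : pd1 (fun y => (w y).1) x = U (1, 0) := rfl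
  have e2 : pd2 (fun y => (w y).2) x = V (0, 1) := rfl
  have eS1a : pd1 (fun y => (JKS1 (w y)).1) x
      = v x * (0 - (u x * U (1, 0) + u x * U (1, 0))
          - 3⁻¹ * (v x * V (1, 0) + v x * V (1, 0)))
        + (1 - u x * u x - (v x * v x) * 3⁻¹) * V (1, 0) := by
    rw [pd1, hS1a.fderiv]
    simp only [ContinuousLinearMap.add_apply, ContinuousLinearMap.sub_apply,
      ContinuousLinearMap.smul_apply, ContinuousLinearMap.zero_apply, smul_eq_mul]
  have eS1b : pd2 (fun y => (JKS1 (w y)).2) x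
      = u x * (0 - (v x * V (0, 1) + v x * V (0, 1))
          - 3⁻¹ * (u x * U (0, 1) + u x * U (0, 1)))
        + (1 - v x * v x - (u x * u x) * 3⁻¹) * U (0, 1) := by
    rw [pd2, hS1b.fderiv]
    simp only [ContinuousLinearMap.add_apply, ContinuousLinearMap.sub_apply,
      ContinuousLinearMap.smul_apply, ContinuousLinearMap.zero_apply, smul_eq_mul]
  have eS2a : pd1 (fun y => (JKS2 (w y)).1) x
      = (-u x) * (0 - 2 * 3⁻¹ * (u x * U (1, 0) + u x * U (1, 0)))
        + (1 - 2 * 3⁻¹ * (u x * u x)) * (-(U (1, 0))) := by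
    rw [pd1, hS2a.fderiv]
    simp only [ContinuousLinearMap.add_apply, ContinuousLinearMap.sub_apply,
      ContinuousLinearMap.smul_apply, ContinuousLinearMap.neg_apply,
      ContinuousLinearMap.zero_apply, smul_eq_mul]
  have eS2b : pd2 (fun y => (JKS2 (w y)).2) x
      = v x * (0 - 2 * 3⁻¹ * (v x * V (0, 1) + v x * V (0, 1)))
        + (1 - 2 * 3⁻¹ * (v x * v x)) * V (0, 1) := by
    rw [pd2, hS2b.fderiv]
    simp only [ContinuousLinearMap.add_apply, ContinuousLinearMap.sub_apply,
      ContinuousLinearMap.smul_apply, ContinuousLinearMap.zero_apply, smul_eq_mul]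
  have hwx : u x ^ 2 + v x ^ 2 = 1 := hw1 x
  rw [e1, e2, eS1a, eS1b, eS2a, eS2b]
  linear_combination (-((u x ^ 2 + v x ^ 2 + 1) * (U (1, 0) + V (0, 1))
      + 2 * u x * v x * (U (0, 1) + V (1, 0))
      + (u x ^ 2 - v x ^ 2) * (U (1, 0) - V (0, 1)))) * hwx
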